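/- Let K ⊂ Γ × C^n be compact, where Γ is the unit circle, and suppose each fiber K_z = {w : (z,w) ∈ K} is polynomially convex in C^n. Then the fiber over z ∈ Γ of the polynomial hull of K equals the polynomial hull of K_z: (K̂)_z = (K_z)^ for z ∈ Γ. -/

import Mathlib

/-- The polynomial hull of a compact set `Y ⊆ ℂ^N`. -/
def polyHull {N : ℕ} (Y : Set (Fin N → ℂ)) : Set (Fin N → ℂ) :=
  {x | ∀ P : MvPolynomial (Fin N) ℂ, ∀ M : ℝ,
    (∀ y ∈ Y, ‖MvPolynomial.eval y P‖ ≤ M) → ‖MvPolynomial.eval x P‖ ≤ M}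

lemma norm_sq_half (z x : ℂ) (hz : ‖z‖ = 1) (hx : ‖x‖ = 1) :
    ‖(1 + (starRingEnd ℂ) z * x) / 2‖ ^ 2 = 1 - ‖x - z‖ ^ 2 / 4 := by
  have hz2 : z.re * z.re + z.im * z.im = 1 := by
    have h := Complex.sq_norm z
    rw [Complex.normSq_apply] at h
    rw [hz] at h; nlinarith
  have hx2 : x.re * x.re + x.im * x.im = 1 := by
    have h := Complex.sq_norm x
    rw [Complex.normSq_apply] at h
    rw [hx] at h; nlinarith
  have h2 : (‖(2:ℂ)‖ : ℝ) = 2 := by simp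
  rw [norm_div, h2, div_pow]
  have h1 : ‖1 + (starRingEnd ℂ) z * x‖ ^ 2 = Complex.normSq (1 + (starRingEnd ℂ) z * x) := by
    rw [Complex.sq_norm]
  have h3 : ‖x - z‖ ^ 2 = Complex.normSq (x - z) := by
    rw [Complex.sq_norm]
  rw [h1, h3]
  simp only [Complex.normSq_apply, Complex.add_re, Complex.add_im, Complex.one_re, Complex.one_im,
    Complex.mul_re, Complex.mul_im, Complex.sub_re, Complex.sub_im, Complex.conj_re, Complex.conj_im]
  nlinarith [hz2, hx2]

open MvPolynomial in
lemma core {n : ℕ} (K : Set (Fin (n+1) → ℂ)) (hK : IsCompact K)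
    (hcirc : ∀ x ∈ K, ‖x 0‖ = 1) (z : ℂ) (hz : ‖z‖ = 1) (w : Fin n → ℂ)
    (h : Fin.cons z w ∈ polyHull K)
    (Q : MvPolynomial (Fin (n+1)) ℂ) (B : ℝ) (hB : 0 < B)
    (hQ : ∀ x ∈ K, x 0 = z → ‖eval x Q‖ < B) :
    ‖eval (Fin.cons z w) Q‖ ≤ B := by
  classical
  -- the "bad" set where |Q| ≥ B
  set S : Set (Fin (n+1) → ℂ) := {x ∈ K | B ≤ ‖eval x Q‖} with hS
  have hScpt : IsCompact S := by
    have : S = K ∩ (fun x => ‖eval x Q‖) ⁻¹' Set.Ici B := by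
      ext x; simp [hS, Set.mem_setOf_eq]
    rw [this]
    exact hK.inter_right (isClosed_Ici.preimage ((Q.continuous_eval).norm))
  -- distance from z on the bad set
  obtain ⟨r, hr0, hr1, hrS⟩ : ∃ r : ℝ, 0 < r ∧ r ≤ 1 ∧ ∀ x ∈ S, r ≤ ‖x 0 - z‖ := by
    rcases Set.eq_empty_or_nonempty S with hSe | hSne
    · exact ⟨1, one_pos, le_refl 1, by simp [hSe]⟩
    · obtain ⟨x₀, hx₀S, hx₀min⟩ := hScpt.exists_isMinOn hSne
        (Continuous.continuousOn (by continuity : Continuous (fun x : Fin (n+1) → ℂ => ‖x 0 - z‖)))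
      have hx₀ne : x₀ 0 ≠ z := by
        intro he
        exact absurd hx₀S.2 (not_le.mpr (hQ x₀ hx₀S.1 he))
      have hpos : 0 < ‖x₀ 0 - z‖ := by
        rw [norm_pos_iff]; exact sub_ne_zero.mpr hx₀ne
      refine ⟨min ‖x₀ 0 - z‖ 1, lt_min hpos one_pos, min_le_right _ _, ?_⟩
      intro x hx
      exact le_trans (min_le_left _ _) (hx₀min hx)
  set δ : ℝ := Real.sqrt (1 - r ^ 2 / 4) with hδ
  have hδ0 : 0 ≤ δ := Real.sqrt_nonneg _
  have hδ1 : δ < 1 := by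
    rw [hδ, Real.sqrt_lt' one_pos]
    nlinarith
  -- uniform bound on |Q| over K
  obtain ⟨Cb, hC⟩ := hK.exists_bound_of_continuousOn (Q.continuous_eval.continuousOn)
  set C' : ℝ := max Cb 1 with hC'
  have hC'1 : (1:ℝ) ≤ C' := le_max_right _ _
  have hC'0 : (0:ℝ) < C' := lt_of_lt_of_le one_pos hC'1
  obtain ⟨k, hk⟩ := exists_pow_lt_of_lt_one (div_pos hB hC'0) hδ1
  have hkB : C' * δ ^ k ≤ B := by
    rw [← le_div_iff₀' hC'0]; exact hk.le
  -- the auxiliary polynomial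
  set L : MvPolynomial (Fin (n+1)) ℂ :=
    C ((1:ℂ)/2) + C ((starRingEnd ℂ) z / 2) * X 0 with hL
  have hLeval : ∀ x : Fin (n+1) → ℂ, eval x L = (1 + (starRingEnd ℂ) z * x 0) / 2 := by
    intro x; simp [hL]; ring
  have hcz : (starRingEnd ℂ) z * z = 1 := by
    rw [mul_comm, Complex.mul_conj, Complex.normSq_eq_norm_sq, hz]
    norm_num
  have hLz : eval (Fin.cons z w) L = 1 := by
    rw [hLeval, Fin.cons_zero, hcz]
    norm_num
  -- apply the hull condition to Q * L^k
  have hmain := h (Q * L ^ k) B ?_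
  · rwa [map_mul, map_pow, hLz, one_pow, mul_one] at hmain
  intro x hx
  rw [map_mul, map_pow, norm_mul, norm_pow, hLeval]
  have hxnorm := hcirc x hx
  have hLsq := norm_sq_half z (x 0) hz hxnorm
  by_cases hxS : x ∈ S
  · -- far from z: small factor
    have hrx := hrS x hxS
    have hLle : ‖(1 + (starRingEnd ℂ) z * x 0) / 2‖ ≤ δ := by
      rw [hδ]
      rw [show ‖(1 + (starRingEnd ℂ) z * x 0) / 2‖ =
        Real.sqrt (‖(1 + (starRingEnd ℂ) z * x 0) / 2‖ ^ 2) by rw [Real.sqrt_sq (norm_nonneg _)]]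
      apply Real.sqrt_le_sqrt
      rw [hLsq]
      nlinarith [norm_nonneg (x 0 - z)]
    calc ‖eval x Q‖ * ‖(1 + (starRingEnd ℂ) z * x 0) / 2‖ ^ k
        ≤ C' * δ ^ k := by
          apply mul_le_mul (le_trans (hC x hx) (le_max_left _ _))
            (pow_le_pow_left₀ (norm_nonneg _) hLle k) (by positivity) hC'0.le
      _ ≤ B := hkB
  · -- near z: |Q| < B, factor ≤ 1
    have hQx : ‖eval x Q‖ < B := by
      by_contra hc
      exact hxS ⟨hx, not_lt.mp hc⟩
    have hLle : ‖(1 + (starRingEnd ℂ) z * x 0) / 2‖ ≤ 1 := by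
      rw [show (1:ℝ) = Real.sqrt 1 by simp,
        show ‖(1 + (starRingEnd ℂ) z * x 0) / 2‖ =
        Real.sqrt (‖(1 + (starRingEnd ℂ) z * x 0) / 2‖ ^ 2) by rw [Real.sqrt_sq (norm_nonneg _)]]
      apply Real.sqrt_le_sqrt
      rw [hLsq]
      nlinarith [norm_nonneg (x 0 - z)]
    calc ‖eval x Q‖ * ‖(1 + (starRingEnd ℂ) z * x 0) / 2‖ ^ k
        ≤ B * 1 := mul_le_mul hQx.le (pow_le_one₀ (norm_nonneg _) hLle) (by positivity) hB.le
      _ = B := mul_one B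

/-- If `K ⊆ Γ × ℂⁿ` is compact and each fiber `K_z` is polynomially convex, then the fiber of
the polynomial hull of `K` over `z ∈ Γ` is the polynomial hull of the fiber `K_z`. -/
theorem stmt7 {n : ℕ} (K : Set (Fin (n + 1) → ℂ)) (hK : IsCompact K)
    (hcirc : ∀ x ∈ K, ‖x 0‖ = 1)
    (hfib : ∀ z : ℂ, ‖z‖ = 1 →
      polyHull {w : Fin n → ℂ | Fin.cons z w ∈ K} = {w : Fin n → ℂ | Fin.cons z w ∈ K}) :
    ∀ z : ℂ, ‖z‖ = 1 →
      {w : Fin n → ℂ | Fin.cons z w ∈ polyHull K} =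
        polyHull {w : Fin n → ℂ | Fin.cons z w ∈ K} := by
  intro z hz
  ext w
  simp only [Set.mem_setOf_eq]
  constructor
  · intro h
    intro Q M hQM
    by_cases hne : ∃ y : Fin n → ℂ, Fin.cons z y ∈ K
    · obtain ⟨y, hy⟩ := hne
      have hM0 : (0:ℝ) ≤ M := le_trans (norm_nonneg _) (hQM y hy)
      apply le_of_forall_pos_le_add
      intro ε hε
      have hcomp : (Fin.cons z w ∘ Fin.succ) = w := by
        funext i; simp [Fin.cons_succ]
      have hkey := core K hK hcirc z hz w h (MvPolynomial.rename Fin.succ Q) (M + ε)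
        (by linarith) ?_
      · rwa [MvPolynomial.eval_rename, hcomp] at hkey
      · intro x hx hx0
        rw [MvPolynomial.eval_rename]
        have hxK : Fin.cons z (x ∘ Fin.succ) ∈ K := by
          have : Fin.cons (x 0) (Fin.tail x) = x := Fin.cons_self_tail x
          rw [hx0] at this
          show Fin.cons z (Fin.tail x) ∈ K
          rw [this]; exact hx
        calc ‖MvPolynomial.eval (x ∘ Fin.succ) Q‖ ≤ M := hQM _ hxK
          _ < M + ε := by linarith
    · exfalso
      have hkey := core K hK hcirc z hz w h 1 (1/2) (by norm_num) ?_
      · norm_num at hkey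
      · intro x hx hx0
        exact absurd ⟨Fin.tail x, by
          have : Fin.cons (x 0) (Fin.tail x) = x := Fin.cons_self_tail x
          rw [hx0] at this
          rw [this]; exact hx⟩ hne
  · intro hw
    have hwK : Fin.cons z w ∈ K := by
      have := hfib z hz
      rw [this] at hw
      exact hw
    intro P M hPM
    exact hPM _ hwK
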